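/- Let T > 0 and let f : [0,T] → ℝ be continuous with f(0) ≥ 0. If m : [0,T] → ℝ is any continuous nondecreasing function with m(0) = 0 such that f(t) + m(t) ≥ 0 for all t ∈ [0,T] and the Lebesgue–Stieltjes measure induced by m assigns zero mass to {s ∈ [0,T] : f(s) + m(s) > 0}, then m(t) = sup_{0 ≤ s ≤ t} max(−f(s), 0) for all t ∈ [0,T]. -/

import Mathlib

open Set MeasureTheory

/-- The Skorohod reflection term: `m_f(t) = sup_{0 ≤ s ≤ t} max(-f(s), 0)`. -/
noncomputable def mf (f : ℝ → ℝ) (t : ℝ) : ℝ :=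
  sSup ((fun s => max (-f s) 0) '' Set.Icc 0 t)

/-- Skorohod's lemma, uniqueness part: any continuous nondecreasing `m` with `m(0) = 0`,
keeping `f + m` nonnegative on `[0,T]`, whose induced Lebesgue–Stieltjes measure assigns
zero mass to `{s ∈ [0,T] : f(s) + m(s) > 0}`, must equal
`m(t) = sup_{0 ≤ s ≤ t} max(-f(s), 0)` on `[0,T]`. -/
theorem stmt_1 (T : ℝ) (hT : 0 < T) (f m : ℝ → ℝ)
    (hf : ContinuousOn f (Set.Icc 0 T)) (hf0 : 0 ≤ f 0)
    (hm : ContinuousOn m (Set.Icc 0 T))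
    (hmono : MonotoneOn m (Set.Icc 0 T))
    (hm0 : m 0 = 0)
    (hpos : ∀ t ∈ Set.Icc 0 T, 0 ≤ f t + m t)
    (hflat : ∃ S : StieltjesFunction ℝ,
      (∀ t : ℝ, S t = m (min (max t 0) T)) ∧
      S.measure {s | s ∈ Set.Icc 0 T ∧ 0 < f s + m s} = 0) :
    ∀ t ∈ Set.Icc 0 T, m t = mf f t := by
  obtain ⟨S, hS, hS0⟩ := hflat
  have hbddT : BddAbove ((fun s => max (-f s) 0) '' Set.Icc 0 T) :=
    (isCompact_Icc.image_of_continuousOn (by fun_prop : ContinuousOn (fun s => max (-f s) 0) (Set.Icc 0 T))).bddAbove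
  have hbdd : ∀ t, t ≤ T → BddAbove ((fun s => max (-f s) 0) '' Set.Icc 0 t) := by
    intro t ht
    exact hbddT.mono (Set.image_mono (Set.Icc_subset_Icc_right ht))
  have hmf_mono : ∀ s t, 0 ≤ s → s ≤ t → t ≤ T → mf f s ≤ mf f t := by
    intro s t hs hst htT
    apply csSup_le_csSup (hbdd t htT)
    · exact ⟨_, ⟨0, ⟨le_refl 0, hs⟩, rfl⟩⟩
    · exact Set.image_mono (Set.Icc_subset_Icc_right hst)
  have hmf_ge : ∀ t, 0 ≤ t → t ≤ T → ∀ s ∈ Set.Icc 0 t, max (-f s) 0 ≤ mf f t := by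
    intro t ht htT s hs
    exact le_csSup (hbdd t htT) ⟨s, hs, rfl⟩
  intro t ht
  obtain ⟨ht0, htT⟩ := ht
  have hmt0 : 0 ≤ m t := by
    have := hmono ⟨le_refl 0, hT.le⟩ ⟨ht0, htT⟩ ht0
    linarith
  have hge : mf f t ≤ m t := by
    refine csSup_le ⟨max (-f 0) 0, ⟨0, ⟨le_refl 0, ht0⟩, rfl⟩⟩ ?_
    rintro x ⟨s, hs, rfl⟩
    have hsT : s ∈ Set.Icc 0 T := ⟨hs.1, hs.2.trans htT⟩
    have h1 : -f s ≤ m s := by linarith [hpos s hsT]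
    have h2 : m s ≤ m t := hmono hsT ⟨ht0, htT⟩ hs.2
    exact max_le (h1.trans h2) hmt0
  set A := {s | s ∈ Set.Icc 0 t ∧ m s ≤ mf f s} with hA
  have h0A : (0:ℝ) ∈ A := by
    refine ⟨⟨le_refl 0, ht0⟩, ?_⟩
    rw [hm0]
    exact le_trans (le_max_right _ _) (hmf_ge 0 le_rfl (ht0.trans htT) 0 ⟨le_rfl, le_rfl⟩)
  have hAne : A.Nonempty := ⟨0, h0A⟩
  have hAbdd : BddAbove A := ⟨t, fun s hs => hs.1.2⟩
  set a := sSup A with ha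
  have haA : 0 ≤ a := le_csSup hAbdd h0A
  have hat : a ≤ t := csSup_le hAne fun s hs => hs.1.2
  have haT : a ∈ Set.Icc 0 T := ⟨haA, hat.trans htT⟩
  have hma : m a ≤ mf f a := by
    by_contra h
    push_neg at h
    have hεpos : 0 < m a - mf f a := by linarith
    have hcont : ContinuousWithinAt m (Set.Icc 0 T) a := hm a haT
    rw [Metric.continuousWithinAt_iff] at hcont
    obtain ⟨δ, hδpos, hδ⟩ := hcont _ hεpos
    obtain ⟨s, hsA, hsgt⟩ := exists_lt_of_lt_csSup hAne (by linarith : a - δ < a)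
    have hsa : s ≤ a := le_csSup hAbdd hsA
    have hsT : s ∈ Set.Icc 0 T := ⟨hsA.1.1, hsA.1.2.trans htT⟩
    have hdist : dist s a < δ := by
      rw [Real.dist_eq, abs_of_nonpos (by linarith)]; linarith
    have hd := hδ hsT hdist
    rw [Real.dist_eq] at hd
    have h1 : m a - (m a - mf f a) < m s := by
      rcases abs_lt.mp hd with ⟨h1, h2⟩; linarith
    have h2 : mf f s ≤ mf f a := hmf_mono s a hsA.1.1 hsa haT.2
    have h3 := hsA.2
    linarith
  have hsub : Set.Ioc a t ⊆ {s | s ∈ Set.Icc 0 T ∧ 0 < f s + m s} := by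
    intro s hs
    have hs0 : 0 ≤ s := haA.trans hs.1.le
    have hsT : s ∈ Set.Icc 0 T := ⟨hs0, hs.2.trans htT⟩
    refine ⟨hsT, ?_⟩
    have hsnA : s ∉ A := fun h => absurd (le_csSup hAbdd h) (not_le.mpr hs.1)
    have hlt : mf f s < m s := by
      by_contra h
      exact hsnA ⟨⟨hs0, hs.2⟩, not_lt.mp h⟩
    have hge' : -f s ≤ mf f s :=
      le_trans (le_max_left _ _) (hmf_ge s hs0 hsT.2 s ⟨hs0, le_rfl⟩)
    linarith
  have hmeas : S.measure (Set.Ioc a t) = 0 :=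
    le_antisymm (hS0 ▸ measure_mono hsub) zero_le
  rw [StieltjesFunction.measure_Ioc] at hmeas
  have hSa : S a = m a := by rw [hS]; congr 1; rw [max_eq_left haA, min_eq_left haT.2]
  have hSt : S t = m t := by rw [hS]; congr 1; rw [max_eq_left ht0, min_eq_left htT]
  rw [hSa, hSt, ENNReal.ofReal_eq_zero] at hmeas
  have hle : m t ≤ mf f t := by
    have := hmf_mono a t haA hat htT
    linarith
  linarith
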